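/- Let n ≥ 2, let R be an algebraic curvature operator on ℝⁿ, and let ℓ ∈ ℝ. Then Q(R + ℓ·I) = Q(R) + ℓ·(Ric ⊼ id) + (n−1)·ℓ²·I as symmetric bilinear forms on so(n,ℝ), where the 4-tensors Ric ⊼ id and I are identified with the bilinear forms they induce via T(u,w) = (1/4) Σ_{i,j,k,l} T_{ijkl} u_{ij} w_{kl}. -/

import Mathlib

open Matrix BigOperators Finset

/-- An algebraic curvature operator on ℝⁿ: symmetries and first Bianchi identity. -/
def IsCurvOp (n : ℕ) (R : Fin n → Fin n → Fin n → Fin n → ℝ) : Prop :=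
  (∀ i j k l, R i j k l = - R j i k l) ∧
  (∀ i j k l, R i j k l = - R i j l k) ∧
  (∀ i j k l, R i j k l = R k l i j) ∧
  (∀ i j k l, R i j k l + R j k i l + R k i j l = 0)

/-- The bilinear form `T(u,w) = (1/4) Σ T_{ijkl} u_{ij} w_{kl}` induced by a 4-tensor
on antisymmetric matrices. -/
noncomputable def rformR {n : ℕ} (T : Fin n → Fin n → Fin n → Fin n → ℝ)
    (u w : Matrix (Fin n) (Fin n) ℝ) : ℝ :=
  (1/4) * ∑ i, ∑ j, ∑ k, ∑ l, T i j k l * u i j * w k l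

/-- The Ricci tensor of a curvature operator. -/
noncomputable def ricci {n : ℕ} (R : Fin n → Fin n → Fin n → Fin n → ℝ) :
    Matrix (Fin n) (Fin n) ℝ :=
  Matrix.of fun a b => ∑ i, R i a i b

/-- The symmetric endomorphism `R̂`, characterized by `⟨R̂u, w⟩ = R(u,w)`
for antisymmetric `u, w`, where `⟨u,w⟩ = −tr(uw)/2`. -/
noncomputable def RhatR {n : ℕ} (R : Fin n → Fin n → Fin n → Fin n → ℝ)
    (u : Matrix (Fin n) (Fin n) ℝ) : Matrix (Fin n) (Fin n) ℝ :=
  Matrix.of fun k l => (1/2) * ∑ i, ∑ j, R i j k l * u i j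

/-- The adjoint action `ad_u(x) = ux − xu`. -/
noncomputable def adR {n : ℕ} (u x : Matrix (Fin n) (Fin n) ℝ) : Matrix (Fin n) (Fin n) ℝ :=
  u * x - x * u

/-- Trace of a (linear) endomorphism of the space of `n×n` real matrices, computed with
respect to the standard basis. -/
noncomputable def mtraceR {n : ℕ}
    (f : Matrix (Fin n) (Fin n) ℝ → Matrix (Fin n) (Fin n) ℝ) : ℝ :=
  ∑ p, ∑ q, f (Matrix.single p q 1) p q

/-- `R²(u,w) = ⟨R̂u, R̂w⟩`. -/
noncomputable def R2R {n : ℕ} (R : Fin n → Fin n → Fin n → Fin n → ℝ)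
    (u w : Matrix (Fin n) (Fin n) ℝ) : ℝ :=
  -(Matrix.trace (RhatR R u * RhatR R w)) / 2

/-- `R^#(u,w) = −(1/2) tr(ad_u ∘ R̂ ∘ ad_w ∘ R̂)`. -/
noncomputable def RsharpR {n : ℕ} (R : Fin n → Fin n → Fin n → Fin n → ℝ)
    (u w : Matrix (Fin n) (Fin n) ℝ) : ℝ :=
  -(1/2) * mtraceR (fun x => adR u (RhatR R (adR w (RhatR R x))))

/-- The quadratic term `Q(R) = R² + R^#` as a bilinear form on `so(n,ℝ)`. -/
noncomputable def QformR {n : ℕ} (R : Fin n → Fin n → Fin n → Fin n → ℝ)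
    (u w : Matrix (Fin n) (Fin n) ℝ) : ℝ :=
  R2R R u w + RsharpR R u w

/-- The Kulkarni–Nomizu product of two symmetric matrices, as a 4-tensor. -/
noncomputable def KN {n : ℕ} (A B : Matrix (Fin n) (Fin n) ℝ) :
    Fin n → Fin n → Fin n → Fin n → ℝ :=
  fun i j k l => A i k * B j l + A j l * B i k - A i l * B j k - A j k * B i l

/-- The curvature operator of the unit round sphere: `I_{ijkl} = δ_{ik}δ_{jl} − δ_{il}δ_{jk}`. -/
noncomputable def Iop (n : ℕ) : Fin n → Fin n → Fin n → Fin n → ℝ :=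
  fun i j k l => (if i = k then (1:ℝ) else 0) * (if j = l then 1 else 0)
    - (if i = l then (1:ℝ) else 0) * (if j = k then 1 else 0)

variable {n : ℕ}

lemma mtraceR_add (f g : Matrix (Fin n) (Fin n) ℝ → Matrix (Fin n) (Fin n) ℝ) :
    mtraceR (fun x => f x + g x) = mtraceR f + mtraceR g := by
  simp [mtraceR, Matrix.add_apply, Finset.sum_add_distrib]

lemma mtraceR_smul (c : ℝ) (f : Matrix (Fin n) (Fin n) ℝ → Matrix (Fin n) (Fin n) ℝ) :
    mtraceR (fun x => c • f x) = c * mtraceR f := by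
  simp [mtraceR, Matrix.smul_apply, Finset.mul_sum, smul_eq_mul]

lemma RhatR_addR (R : Fin n → Fin n → Fin n → Fin n → ℝ) (ℓ : ℝ)
    (x : Matrix (Fin n) (Fin n) ℝ) :
    RhatR (fun i j k l => R i j k l + ℓ * Iop n i j k l) x
      = RhatR R x + ℓ • RhatR (Iop n) x := by
  ext k l
  simp only [RhatR, Matrix.add_apply, Matrix.smul_apply, Matrix.of_apply, smul_eq_mul,
    Finset.mul_sum, ← Finset.sum_add_distrib]
  refine Finset.sum_congr rfl fun i _ => ?_
  refine Finset.sum_congr rfl fun j _ => ?_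
  ring

lemma RhatR_Iop (x : Matrix (Fin n) (Fin n) ℝ) :
    RhatR (Iop n) x = (2⁻¹ : ℝ) • (x - xᵀ) := by
  ext k l
  simp [RhatR, Iop, sub_mul, ite_mul, Finset.sum_sub_distrib, Finset.sum_ite_eq,
    Matrix.sub_apply, Matrix.transpose_apply, Matrix.smul_apply, smul_eq_mul]

lemma RhatR_Iop_antisym {x : Matrix (Fin n) (Fin n) ℝ} (hx : xᵀ = -x) :
    RhatR (Iop n) x = x := by
  rw [RhatR_Iop, hx]; ext i j; simp [Matrix.smul_apply]; ring

lemma RhatR_out_antisym {R : Fin n → Fin n → Fin n → Fin n → ℝ}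
    (h2 : ∀ i j k l, R i j k l = - R i j l k) (x : Matrix (Fin n) (Fin n) ℝ) :
    (RhatR R x)ᵀ = -(RhatR R x) := by
  ext k l
  simp only [RhatR, Matrix.transpose_apply, Matrix.neg_apply, Matrix.of_apply]
  rw [← mul_neg]
  congr 1
  simp only [← Finset.sum_neg_distrib]
  refine Finset.sum_congr rfl fun i _ => ?_
  refine Finset.sum_congr rfl fun j _ => ?_
  rw [h2 i j l k]; ring

lemma RhatR_transpose_in {R : Fin n → Fin n → Fin n → Fin n → ℝ}
    (h1 : ∀ i j k l, R i j k l = - R j i k l) (x : Matrix (Fin n) (Fin n) ℝ) :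
    RhatR R xᵀ = -(RhatR R x) := by
  ext k l
  simp only [RhatR, Matrix.transpose_apply, Matrix.neg_apply, Matrix.of_apply]
  rw [← mul_neg]
  congr 1
  simp only [← Finset.sum_neg_distrib]
  rw [Finset.sum_comm]
  refine Finset.sum_congr rfl fun i _ => ?_
  refine Finset.sum_congr rfl fun j _ => ?_
  rw [h1 j i k l]; ring

lemma RhatR_addx (R : Fin n → Fin n → Fin n → Fin n → ℝ) (x y : Matrix (Fin n) (Fin n) ℝ) :
    RhatR R (x + y) = RhatR R x + RhatR R y := by
  ext k l
  simp [RhatR, Matrix.add_apply, mul_add, Finset.sum_add_distrib]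

lemma RhatR_smulx (R : Fin n → Fin n → Fin n → Fin n → ℝ) (c : ℝ)
    (x : Matrix (Fin n) (Fin n) ℝ) :
    RhatR R (c • x) = c • RhatR R x := by
  ext k l
  simp [RhatR, Matrix.smul_apply, Finset.mul_sum, smul_eq_mul]
  congr 1; ext i; congr 1; ext j; ring

lemma adR_addx (u x y : Matrix (Fin n) (Fin n) ℝ) :
    adR u (x + y) = adR u x + adR u y := by
  simp [adR, Matrix.mul_add, Matrix.add_mul]; abel

lemma adR_smulx (u : Matrix (Fin n) (Fin n) ℝ) (c : ℝ) (x : Matrix (Fin n) (Fin n) ℝ) :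
    adR u (c • x) = c • adR u x := by
  simp [adR, Matrix.mul_smul, Matrix.smul_mul, smul_sub]

lemma adR_antisym {u x : Matrix (Fin n) (Fin n) ℝ} (hu : uᵀ = -u) (hx : xᵀ = -x) :
    (adR u x)ᵀ = -(adR u x) := by
  simp [adR, Matrix.transpose_sub, Matrix.transpose_mul, hu, hx, Matrix.neg_mul,
    Matrix.mul_neg]

lemma adR_transpose {u : Matrix (Fin n) (Fin n) ℝ} (hu : uᵀ = -u)
    (x : Matrix (Fin n) (Fin n) ℝ) :
    adR u xᵀ = (adR u x)ᵀ := by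
  simp [adR, Matrix.transpose_sub, Matrix.transpose_mul, hu, Matrix.neg_mul, Matrix.mul_neg]
  abel

lemma RhatR_subx (R : Fin n → Fin n → Fin n → Fin n → ℝ) (x y : Matrix (Fin n) (Fin n) ℝ) :
    RhatR R (x - y) = RhatR R x - RhatR R y := by
  ext k l
  simp [RhatR, Matrix.sub_apply, mul_sub, Finset.sum_sub_distrib]

lemma adR_subx (u x y : Matrix (Fin n) (Fin n) ℝ) :
    adR u (x - y) = adR u x - adR u y := by
  simp [adR, Matrix.mul_sub, Matrix.sub_mul]; abel

lemma Ax_antisym (x : Matrix (Fin n) (Fin n) ℝ) :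
    ((2⁻¹:ℝ) • (x - xᵀ))ᵀ = -((2⁻¹:ℝ) • (x - xᵀ)) := by
  rw [Matrix.transpose_smul, Matrix.transpose_sub, Matrix.transpose_transpose, ← smul_neg]
  congr 1; abel

lemma RhatR_AW {R : Fin n → Fin n → Fin n → Fin n → ℝ}
    (h1 : ∀ i j k l, R i j k l = - R j i k l) {w : Matrix (Fin n) (Fin n) ℝ}
    (hw : wᵀ = -w) (x : Matrix (Fin n) (Fin n) ℝ) :
    RhatR R (adR w ((2⁻¹:ℝ) • (x - xᵀ))) = RhatR R (adR w x) := by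
  rw [adR_smulx, adR_subx, RhatR_smulx, RhatR_subx, adR_transpose hw,
    RhatR_transpose_in h1]
  ext k l
  simp [Matrix.smul_apply, Matrix.sub_apply, Matrix.neg_apply]
  ring

lemma sharp_decomp {R : Fin n → Fin n → Fin n → Fin n → ℝ}
    (h1 : ∀ i j k l, R i j k l = - R j i k l)
    (h2 : ∀ i j k l, R i j k l = - R i j l k)
    {u w : Matrix (Fin n) (Fin n) ℝ} (hu : uᵀ = -u) (hw : wᵀ = -w) (ℓ : ℝ) :
    RsharpR (fun i j k l => R i j k l + ℓ * Iop n i j k l) u w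
      = RsharpR R u w
        - ℓ/2 * (mtraceR (fun x => adR u (adR w (RhatR R x)))
            + mtraceR (fun x => adR u (RhatR R (adR w x))))
        - ℓ^2/2 * mtraceR (fun x => adR u (adR w ((2⁻¹:ℝ) • (x - xᵀ)))) := by
  have hfun : ∀ x : Matrix (Fin n) (Fin n) ℝ,
      adR u (RhatR (fun i j k l => R i j k l + ℓ * Iop n i j k l)
        (adR w (RhatR (fun i j k l => R i j k l + ℓ * Iop n i j k l) x)))
      = adR u (RhatR R (adR w (RhatR R x)))
        + ℓ • (adR u (adR w (RhatR R x)) + adR u (RhatR R (adR w x)))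
        + ℓ^2 • adR u (adR w ((2⁻¹:ℝ) • (x - xᵀ))) := by
    intro x
    have hy1 : (adR w (RhatR R x))ᵀ = -(adR w (RhatR R x)) :=
      adR_antisym hw (RhatR_out_antisym h2 x)
    have hy2 : (adR w ((2⁻¹:ℝ) • (x - xᵀ)))ᵀ = -(adR w ((2⁻¹:ℝ) • (x - xᵀ))) :=
      adR_antisym hw (Ax_antisym x)
    have e1 : RhatR (fun i j k l => R i j k l + ℓ * Iop n i j k l) x
        = RhatR R x + ℓ • ((2⁻¹:ℝ) • (x - xᵀ)) := by rw [RhatR_addR, RhatR_Iop]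
    rw [e1, adR_addx, adR_smulx]
    set y1 := adR w (RhatR R x) with hy1d
    set y2 := adR w ((2⁻¹:ℝ) • (x - xᵀ)) with hy2d
    have hy : (y1 + ℓ • y2)ᵀ = -(y1 + ℓ • y2) := by
      rw [Matrix.transpose_add, hy1, Matrix.transpose_smul, hy2]
      module
    have e2 : RhatR (fun i j k l => R i j k l + ℓ * Iop n i j k l) (y1 + ℓ • y2)
        = RhatR R (y1 + ℓ • y2) + ℓ • (y1 + ℓ • y2) := by
      rw [RhatR_addR, RhatR_Iop_antisym hy]
    rw [e2, RhatR_addx, RhatR_smulx, hy2d, RhatR_AW h1 hw]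
    simp only [adR_addx, adR_smulx]
    module
  unfold RsharpR
  rw [show (fun x => adR u (RhatR (fun i j k l => R i j k l + ℓ * Iop n i j k l)
      (adR w (RhatR (fun i j k l => R i j k l + ℓ * Iop n i j k l) x)))) = _ from funext hfun]
  rw [mtraceR_add, mtraceR_add, mtraceR_smul, mtraceR_smul, mtraceR_add]
  ring

lemma r2_decomp {R : Fin n → Fin n → Fin n → Fin n → ℝ}
    {u w : Matrix (Fin n) (Fin n) ℝ} (hu : uᵀ = -u) (hw : wᵀ = -w) (ℓ : ℝ) :
    R2R (fun i j k l => R i j k l + ℓ * Iop n i j k l) u w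
      = R2R R u w - ℓ/2 * (Matrix.trace (RhatR R u * w) + Matrix.trace (u * RhatR R w))
        - ℓ^2/2 * Matrix.trace (u * w) := by
  have eu : RhatR (fun i j k l => R i j k l + ℓ * Iop n i j k l) u = RhatR R u + ℓ • u := by
    rw [RhatR_addR, RhatR_Iop_antisym hu]
  have ew : RhatR (fun i j k l => R i j k l + ℓ * Iop n i j k l) w = RhatR R w + ℓ • w := by
    rw [RhatR_addR, RhatR_Iop_antisym hw]
  unfold R2R
  rw [eu, ew, Matrix.add_mul, Matrix.mul_add, Matrix.mul_add, Matrix.smul_mul,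
    Matrix.mul_smul, Matrix.mul_smul, Matrix.trace_add, Matrix.trace_add,
    Matrix.trace_add, Matrix.trace_smul, Matrix.trace_smul, Matrix.trace_smul,
    Matrix.smul_mul, Matrix.trace_smul]
  simp only [smul_eq_mul]
  ring

lemma sum4_prod (g : Fin n → Fin n → Fin n → Fin n → ℝ) :
    (∑ i, ∑ j, ∑ k, ∑ l, g i j k l)
      = ∑ p : Fin n × Fin n × Fin n × Fin n, g p.1 p.2.1 p.2.2.1 p.2.2.2 := by
  simp [Fintype.sum_prod_type]

lemma sum2_congr (f g : Fin n → Fin n → ℝ) (h : ∀ a b, f a b = g a b) :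
    (∑ a, ∑ b, f a b) = ∑ a, ∑ b, g a b :=
  Finset.sum_congr rfl fun a _ => Finset.sum_congr rfl fun b _ => h a b

lemma sum3_congr (f g : Fin n → Fin n → Fin n → ℝ) (h : ∀ a b c, f a b c = g a b c) :
    (∑ a, ∑ b, ∑ c, f a b c) = ∑ a, ∑ b, ∑ c, g a b c :=
  Finset.sum_congr rfl fun a _ => sum2_congr _ _ (h a)

lemma sum4_congr (f g : Fin n → Fin n → Fin n → Fin n → ℝ)
    (h : ∀ a b c d, f a b c d = g a b c d) :
    (∑ a, ∑ b, ∑ c, ∑ d, f a b c d) = ∑ a, ∑ b, ∑ c, ∑ d, g a b c d :=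
  Finset.sum_congr rfl fun a _ => sum3_congr _ _ (h a)

/-- rotate left: abc -> (value at) bca, i.e. move first sum to the inside. -/
lemma sum3_rotL (f : Fin n → Fin n → Fin n → ℝ) :
    (∑ a, ∑ b, ∑ c, f a b c) = ∑ b, ∑ c, ∑ a, f a b c := by
  rw [Finset.sum_comm]
  exact Finset.sum_congr rfl fun b _ => Finset.sum_comm

lemma sum3_rotR (f : Fin n → Fin n → Fin n → Fin n → ℝ) : True := trivial

lemma sum3_rotR' (f : Fin n → Fin n → Fin n → ℝ) :
    (∑ a, ∑ b, ∑ c, f a b c) = ∑ c, ∑ a, ∑ b, f a b c := by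
  rw [sum3_rotL, sum3_rotL]

lemma sum3_swap12 (f : Fin n → Fin n → Fin n → ℝ) :
    (∑ a, ∑ b, ∑ c, f a b c) = ∑ b, ∑ a, ∑ c, f a b c := Finset.sum_comm

lemma sum3_swap23 (f : Fin n → Fin n → Fin n → ℝ) :
    (∑ a, ∑ b, ∑ c, f a b c) = ∑ a, ∑ c, ∑ b, f a b c :=
  Finset.sum_congr rfl fun a _ => Finset.sum_comm

lemma sum3_swap13 (f : Fin n → Fin n → Fin n → ℝ) :
    (∑ a, ∑ b, ∑ c, f a b c) = ∑ c, ∑ b, ∑ a, f a b c := by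
  rw [sum3_rotL, sum3_rotL, sum3_swap23]

/-- move the first sum of four to the inside. -/
lemma sum4_rotL (f : Fin n → Fin n → Fin n → Fin n → ℝ) :
    (∑ a, ∑ b, ∑ c, ∑ d, f a b c d) = ∑ b, ∑ c, ∑ d, ∑ a, f a b c d := by
  rw [Finset.sum_comm]
  refine Finset.sum_congr rfl fun b _ => ?_
  rw [Finset.sum_comm]
  exact Finset.sum_congr rfl fun c _ => Finset.sum_comm

/-- move the second sum of four to the inside. -/
lemma sum4_rot2 (f : Fin n → Fin n → Fin n → Fin n → ℝ) :
    (∑ a, ∑ b, ∑ c, ∑ d, f a b c d) = ∑ a, ∑ c, ∑ d, ∑ b, f a b c d :=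
  Finset.sum_congr rfl fun a _ => sum3_rotL _

lemma sum4_prod' (g : Fin n → Fin n → Fin n → Fin n → ℝ) :
    (∑ i, ∑ j, ∑ k, ∑ l, g i j k l)
      = ∑ p : Fin n × Fin n × Fin n × Fin n, g p.1 p.2.1 p.2.2.1 p.2.2.2 := by
  rw [Fintype.sum_prod_type]
  refine Finset.sum_congr rfl fun i _ => ?_
  rw [Fintype.sum_prod_type]
  refine Finset.sum_congr rfl fun j _ => ?_
  rw [Fintype.sum_prod_type]

lemma sum4_equiv (f g : Fin n → Fin n → Fin n → Fin n → ℝ)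
    (e : (Fin n × Fin n × Fin n × Fin n) ≃ (Fin n × Fin n × Fin n × Fin n))
    (h : ∀ i j k l, f i j k l
      = g (e (i,j,k,l)).1 (e (i,j,k,l)).2.1 (e (i,j,k,l)).2.2.1 (e (i,j,k,l)).2.2.2) :
    (∑ i, ∑ j, ∑ k, ∑ l, f i j k l) = ∑ i, ∑ j, ∑ k, ∑ l, g i j k l := by
  rw [sum4_prod', sum4_prod' g]
  exact Fintype.sum_equiv e _ _ (fun p => (h p.1 p.2.1 p.2.2.1 p.2.2.2).symm ▸ rfl)

def ePair {n : ℕ} : (Fin n × Fin n × Fin n × Fin n) ≃ (Fin n × Fin n × Fin n × Fin n) :=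
  ⟨fun p => (p.2.2.1, p.2.2.2, p.1, p.2.1), fun p => (p.2.2.1, p.2.2.2, p.1, p.2.1),
    fun p => rfl, fun p => rfl⟩

def eSwap12 {n : ℕ} : (Fin n × Fin n × Fin n × Fin n) ≃ (Fin n × Fin n × Fin n × Fin n) :=
  ⟨fun p => (p.2.1, p.1, p.2.2.1, p.2.2.2), fun p => (p.2.1, p.1, p.2.2.1, p.2.2.2),
    fun p => rfl, fun p => rfl⟩

def eSwap34 {n : ℕ} : (Fin n × Fin n × Fin n × Fin n) ≃ (Fin n × Fin n × Fin n × Fin n) :=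
  ⟨fun p => (p.1, p.2.1, p.2.2.2, p.2.2.1), fun p => (p.1, p.2.1, p.2.2.2, p.2.2.1),
    fun p => rfl, fun p => rfl⟩

def eSwap24 {n : ℕ} : (Fin n × Fin n × Fin n × Fin n) ≃ (Fin n × Fin n × Fin n × Fin n) :=
  ⟨fun p => (p.1, p.2.2.2, p.2.2.1, p.2.1), fun p => (p.1, p.2.2.2, p.2.2.1, p.2.1),
    fun p => rfl, fun p => rfl⟩

/-- (i,j,k,l) ↦ (j,k,i,l) -/
def eCyc231 {n : ℕ} : (Fin n × Fin n × Fin n × Fin n) ≃ (Fin n × Fin n × Fin n × Fin n) :=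
  ⟨fun p => (p.2.1, p.2.2.1, p.1, p.2.2.2), fun p => (p.2.2.1, p.1, p.2.1, p.2.2.2),
    fun p => rfl, fun p => rfl⟩

/-- (i,j,k,l) ↦ (k,i,j,l) -/
def eCyc312 {n : ℕ} : (Fin n × Fin n × Fin n × Fin n) ≃ (Fin n × Fin n × Fin n × Fin n) :=
  ⟨fun p => (p.2.2.1, p.1, p.2.1, p.2.2.2), fun p => (p.2.1, p.2.2.1, p.1, p.2.2.2),
    fun p => rfl, fun p => rfl⟩

/-- (i,j,k,l) ↦ (l,j,i,k) : inverse sends (a,b,c,d) to (c,b,d,a) -/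
def eB3 {n : ℕ} : (Fin n × Fin n × Fin n × Fin n) ≃ (Fin n × Fin n × Fin n × Fin n) :=
  ⟨fun p => (p.2.2.2, p.2.1, p.1, p.2.2.1), fun p => (p.2.2.1, p.2.1, p.2.2.2, p.1),
    fun p => rfl, fun p => rfl⟩

section scalars
variable {R : Fin n → Fin n → Fin n → Fin n → ℝ} {u w : Matrix (Fin n) (Fin n) ℝ}

/-- pointwise antisymmetry -/
lemma anti_pt (hu : uᵀ = -u) : ∀ a b, u a b = -(u b a) := fun a b => by
  have := congrFun (congrFun hu b) a
  simpa [Matrix.transpose_apply] using this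

lemma ricci_symm (h3 : ∀ i j k l, R i j k l = R k l i j) (a b : Fin n) :
    ricci R a b = ricci R b a := by
  simp only [ricci, Matrix.of_apply]
  exact Finset.sum_congr rfl fun i _ => h3 i a i b

/-- `PP = Q1` -/
lemma PP_eq_Q1 (h1 : ∀ i j k l, R i j k l = - R j i k l)
    (h2 : ∀ i j k l, R i j k l = - R i j l k)
    (h3 : ∀ i j k l, R i j k l = R k l i j) (hu : uᵀ = -u) :
    (∑ i, ∑ j, ∑ k, ∑ l, R i j k l * u i k * w l j)
      = ∑ i, ∑ j, ∑ k, ∑ l, R i j k l * u j k * w i l := by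
  have step1 : (∑ i, ∑ j, ∑ k, ∑ l, R i j k l * u i k * w l j)
      = ∑ i, ∑ j, ∑ k, ∑ l, R i j k l * u k i * w j l := by
    refine sum4_equiv _ _ (ePair (n := n)) fun i j k l => ?_
    simp only [ePair, Equiv.coe_fn_mk]
    rw [h3 i j k l]
  rw [step1]
  have hu' := anti_pt hu
  refine sum4_equiv _ _ (eSwap12 (n := n)) fun i j k l => ?_
  simp only [eSwap12, Equiv.coe_fn_mk]
  rw [h1 i j k l, hu' k i]; ring

/-- Bianchi consequence: `PP = -(1/2) * SS`. -/
lemma PP_eq (h1 : ∀ i j k l, R i j k l = - R j i k l)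
    (h2 : ∀ i j k l, R i j k l = - R i j l k)
    (h3 : ∀ i j k l, R i j k l = R k l i j)
    (h4 : ∀ i j k l, R i j k l + R j k i l + R k i j l = 0)
    (hu : uᵀ = -u) (hw : wᵀ = -w) :
    (∑ i, ∑ j, ∑ k, ∑ l, R i j k l * u i k * w l j)
      = -(1/2) * ∑ i, ∑ j, ∑ k, ∑ l, R i j k l * u i j * w k l := by
  have hu' := anti_pt hu; have hw' := anti_pt hw
  have split : (∑ i, ∑ j, ∑ k, ∑ l, R i j k l * u i k * w l j)
      = -(∑ i, ∑ j, ∑ k, ∑ l, R j k i l * u i k * w l j)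
        - ∑ i, ∑ j, ∑ k, ∑ l, R k i j l * u i k * w l j := by
    rw [← neg_add']
    rw [show -((∑ i, ∑ j, ∑ k, ∑ l, R j k i l * u i k * w l j)
        + ∑ i, ∑ j, ∑ k, ∑ l, R k i j l * u i k * w l j)
      = ∑ i, ∑ j, ∑ k, ∑ l, -((R j k i l + R k i j l) * (u i k * w l j)) from by
        simp only [← Finset.sum_neg_distrib, ← Finset.sum_add_distrib]
        exact sum4_congr _ _ fun i j k l => by ring]
    exact sum4_congr _ _ fun i j k l => by
      have h := h4 i j k l
      have : R i j k l = -(R j k i l + R k i j l) := by linarith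
      rw [this]; ring
  have t1 : (∑ i, ∑ j, ∑ k, ∑ l, R j k i l * u i k * w l j)
      = ∑ i, ∑ j, ∑ k, ∑ l, R i j k l * u j k * w i l := by
    refine sum4_equiv _ _ (eCyc231 (n := n)) fun i j k l => ?_
    simp only [eCyc231, Equiv.coe_fn_mk]
    rw [hu' i k, hw' l j]; ring
  have t2 : (∑ i, ∑ j, ∑ k, ∑ l, R k i j l * u i k * w l j)
      = ∑ i, ∑ j, ∑ k, ∑ l, R i j k l * u i j * w k l := by
    refine sum4_equiv _ _ (eCyc312 (n := n)) fun i j k l => ?_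
    simp only [eCyc312, Equiv.coe_fn_mk]
    rw [hu' i k, hw' l j]; ring
  have q1 := PP_eq_Q1 (w := w) h1 h2 h3 hu
  rw [split, t1, t2, ← q1] at *
  linarith [split]
end scalars

section scalars2
variable {R : Fin n → Fin n → Fin n → Fin n → ℝ} {u w : Matrix (Fin n) (Fin n) ℝ}

/-- `PP' = PP` -/
lemma PP'_eq (h1 : ∀ i j k l, R i j k l = - R j i k l)
    (h2 : ∀ i j k l, R i j k l = - R i j l k)
    (h3 : ∀ i j k l, R i j k l = R k l i j) :
    (∑ i, ∑ j, ∑ k, ∑ l, R i j k l * w i k * u l j)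
      = ∑ i, ∑ j, ∑ k, ∑ l, R i j k l * u i k * w l j := by
  have step1 : (∑ i, ∑ j, ∑ k, ∑ l, R i j k l * w i k * u l j)
      = ∑ i, ∑ j, ∑ k, ∑ l, R i j k l * w k i * u j l := by
    refine sum4_equiv _ _ (ePair (n := n)) fun i j k l => ?_
    simp only [ePair, Equiv.coe_fn_mk]
    rw [h3 i j k l]
  rw [step1]
  -- now reindex (i,j,k,l) ↦ (j,i,l,k) : G p = H (e p) with H the target body
  refine sum4_equiv _ _ (⟨fun p => (p.2.1, p.1, p.2.2.2, p.2.2.1),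
    fun p => (p.2.1, p.1, p.2.2.2, p.2.2.1), fun p => rfl, fun p => rfl⟩ :
      (Fin n × Fin n × Fin n × Fin n) ≃ _) fun i j k l => ?_
  simp only [Equiv.coe_fn_mk]
  -- goal: R i j k l * w k i * u j l = R j i l k * u j l * w i k
  rw [show R j i l k = R i j k l from by rw [h1 j i l k, h2 i j l k, neg_neg]]
  ring

/-- `SS` with u,w swapped -/
lemma SS_wu (h3 : ∀ i j k l, R i j k l = R k l i j) :
    (∑ i, ∑ j, ∑ k, ∑ l, R i j k l * w i j * u k l)
      = ∑ i, ∑ j, ∑ k, ∑ l, R i j k l * u i j * w k l := by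
  refine sum4_equiv _ _ (ePair (n := n)) fun i j k l => ?_
  simp only [ePair, Equiv.coe_fn_mk]
  rw [h3 i j k l]; ring

/-- `TT' = TT` -/
lemma TT'_eq (h3 : ∀ i j k l, R i j k l = R k l i j)
    (hu : uᵀ = -u) (hw : wᵀ = -w) :
    (∑ x, ∑ y, ∑ z, ricci R x y * w y z * u z x)
      = ∑ x, ∑ y, ∑ z, ricci R x y * u y z * w z x := by
  have hu' := anti_pt hu; have hw' := anti_pt hw
  have step1 : (∑ x, ∑ y, ∑ z, ricci R x y * w y z * u z x)
      = ∑ x, ∑ y, ∑ z, ricci R y x * u x z * w z y := by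
    refine sum3_congr _ _ fun x y z => ?_
    rw [hu' z x, hw' y z, ricci_symm h3 x y]; ring
  rw [step1, sum3_swap12]
end scalars2

section scalars3
variable {R : Fin n → Fin n → Fin n → Fin n → ℝ} {u w : Matrix (Fin n) (Fin n) ℝ}

lemma traceA (hw : wᵀ = -w) :
    Matrix.trace (RhatR R u * w)
      = -(1/2) * ∑ i, ∑ j, ∑ k, ∑ l, R i j k l * u i j * w k l := by
  have hw' := anti_pt hw
  simp only [Matrix.trace, Matrix.diag, Matrix.mul_apply, RhatR, Matrix.of_apply,
    Finset.sum_mul, Finset.mul_sum]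
  refine sum4_equiv _ _ (ePair (n := n)) fun a b c d => ?_
  simp only [ePair, Equiv.coe_fn_mk]
  rw [hw' b a]; ring

lemma traceB (h2 : ∀ i j k l, R i j k l = - R i j l k)
    (h3 : ∀ i j k l, R i j k l = R k l i j) :
    Matrix.trace (u * RhatR R w)
      = -(1/2) * ∑ i, ∑ j, ∑ k, ∑ l, R i j k l * w i j * u k l := by
  simp only [Matrix.trace, Matrix.diag, Matrix.mul_apply, RhatR, Matrix.of_apply,
    Finset.sum_mul, Finset.mul_sum]
  refine sum4_equiv _ _ (ePair (n := n)) fun a b c d => ?_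
  simp only [ePair, Equiv.coe_fn_mk]
  rw [h2 c d b a]
  ring

lemma rformIop (hw : wᵀ = -w) :
    rformR (Iop n) u w = -(1/2) * Matrix.trace (u * w) := by
  have hw' := anti_pt hw
  simp only [rformR, Iop, Matrix.trace, Matrix.diag, Matrix.mul_apply, sub_mul,
    ite_mul, one_mul, zero_mul, mul_ite, mul_zero, mul_one,
    Finset.sum_sub_distrib, Finset.sum_ite_irrel, Finset.sum_ite_eq,
    Finset.sum_ite_eq', Finset.mem_univ, if_true, Finset.sum_const_zero,
    Finset.mul_sum]
  rw [show (∑ i, ∑ j, -(1/2) * (u i j * w j i)) = ∑ i, ∑ j, (1/4 * (u i j * w i j) - 1/4 * (u i j * w j i)) from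
    sum2_congr _ _ fun i j => by rw [hw' i j]; ring]
  simp only [Finset.sum_sub_distrib, Finset.mul_sum]
  rw [mul_sub]
  simp only [Finset.mul_sum]
end scalars3

section scalars4
variable {R : Fin n → Fin n → Fin n → Fin n → ℝ} {u w : Matrix (Fin n) (Fin n) ℝ}

lemma rformKN (h3 : ∀ i j k l, R i j k l = R k l i j) (hu : uᵀ = -u) (hw : wᵀ = -w) :
    rformR (KN (ricci R) 1) u w
      = -(∑ x, ∑ y, ∑ z, ricci R x y * u y z * w z x) := by
  have hu' := anti_pt hu; have hw' := anti_pt hw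
  simp only [rformR, KN, Matrix.one_apply, mul_ite, ite_mul, mul_one, mul_zero,
    zero_mul, one_mul, add_mul, sub_mul, Finset.sum_add_distrib, Finset.sum_sub_distrib,
    Finset.sum_ite_irrel, Finset.sum_ite_eq, Finset.sum_ite_eq', Finset.mem_univ,
    if_true, Finset.sum_const_zero, Finset.mul_sum]
  have hA : (∑ i, ∑ j, ∑ k, ricci R i k * u i j * w k j)
      = -∑ x, ∑ y, ∑ z, ricci R x y * u y z * w z x := by
    rw [show (∑ i, ∑ j, ∑ k, ricci R i k * u i j * w k j)
        = ∑ i, ∑ j, ∑ k, -(ricci R k i * u i j * w j k) from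
      sum3_congr _ _ fun i j k => by rw [hw' k j, ricci_symm h3 i k]; ring]
    rw [sum3_rotR']
    simp only [Finset.sum_neg_distrib]
  have hB : (∑ i, ∑ j, ∑ l, ricci R j l * u i j * w i l)
      = -∑ x, ∑ y, ∑ z, ricci R x y * u y z * w z x := by
    rw [show (∑ i, ∑ j, ∑ l, ricci R j l * u i j * w i l)
        = ∑ i, ∑ j, ∑ l, -(ricci R l j * u j i * w i l) from
      sum3_congr _ _ fun i j l => by rw [hu' i j, ricci_symm h3 j l]; ring]
    rw [sum3_swap13]
    simp only [Finset.sum_neg_distrib]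
  have hC : (∑ i, ∑ j, ∑ l, ricci R i l * u i j * w j l)
      = ∑ x, ∑ y, ∑ z, ricci R x y * u y z * w z x := by
    rw [show (∑ i, ∑ j, ∑ l, ricci R i l * u i j * w j l)
        = ∑ i, ∑ j, ∑ l, (ricci R l i * u i j * w j l) from
      sum3_congr _ _ fun i j l => by rw [ricci_symm h3 i l]]
    rw [sum3_rotR']
  have hD : (∑ i, ∑ j, ∑ k, ricci R j k * u i j * w k i)
      = ∑ x, ∑ y, ∑ z, ricci R x y * u y z * w z x := by
    rw [show (∑ i, ∑ j, ∑ k, ricci R j k * u i j * w k i)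
        = ∑ i, ∑ j, ∑ k, (ricci R j k * w k i * u i j) from
      sum3_congr _ _ fun i j k => by ring]
    rw [sum3_rotL]
    exact TT'_eq h3 hu hw
  rw [hA, hB, hC, hD]
  ring
end scalars4

section scalars5
variable {u w : Matrix (Fin n) (Fin n) ℝ}

lemma mtraceM3 (hu : uᵀ = -u) (hw : wᵀ = -w) :
    mtraceR (fun x => adR u (adR w ((2⁻¹:ℝ) • (x - xᵀ))))
      = ((n:ℝ) - 2) * Matrix.trace (u * w) := by
  have hu' := anti_pt hu; have hw' := anti_pt hw
  simp only [mtraceR, adR, Matrix.smul_apply, Matrix.sub_apply, Matrix.transpose_apply,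
    Matrix.mul_apply, Matrix.single, Matrix.of_apply, ite_and, smul_eq_mul,
    mul_ite, mul_zero, mul_one, ite_mul, zero_mul, mul_sub, sub_mul,
    Finset.sum_sub_distrib, Finset.mul_sum, Finset.sum_mul,
    Finset.sum_ite_irrel, Finset.sum_ite_eq, Finset.sum_ite_eq', Finset.mem_univ,
    if_true, Finset.sum_const_zero]
  have hdu : ∀ x : Fin n, u x x = 0 := fun x => by have := hu' x x; linarith
  have hdw : ∀ x : Fin n, w x x = 0 := fun x => by have := hw' x x; linarith
  simp only [hdu, hdw, zero_mul, mul_zero, Finset.sum_const_zero, Finset.sum_const,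
    Finset.card_univ, Fintype.card_fin, nsmul_eq_mul, Matrix.trace, Matrix.diag,
    Matrix.mul_apply, smul_eq_mul, sub_zero, zero_sub]
  have e1 : (∑ x, ∑ y, u x y * (w y x * 2⁻¹)) = 2⁻¹ * ∑ x, ∑ y, u x y * w y x := by
    simp only [Finset.mul_sum]
    exact sum2_congr _ _ fun x y => by ring
  have E1 : (∑ x, (n:ℝ) * ∑ y, u x y * (w y x * 2⁻¹))
      = (n:ℝ) * (2⁻¹ * ∑ x, ∑ y, u x y * w y x) := by
    rw [← Finset.mul_sum, e1]
  have e2 : (∑ x, ∑ y, u x y * (2⁻¹ * w x y))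
      = -(2⁻¹ * ∑ x, ∑ y, u x y * w y x) := by
    simp only [Finset.mul_sum, ← Finset.sum_neg_distrib]
    exact sum2_congr _ _ fun x y => by rw [hw' x y]; ring
  have e3 : (∑ x, ∑ y, w x y * 2⁻¹ * u x y)
      = -(2⁻¹ * ∑ x, ∑ y, u x y * w y x) := by
    simp only [Finset.mul_sum, ← Finset.sum_neg_distrib]
    exact sum2_congr _ _ fun x y => by rw [hw' x y]; ring
  have e4 : (∑ x, ∑ y, 2⁻¹ * w x y * u y x)
      = 2⁻¹ * ∑ x, ∑ y, u x y * w y x := by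
    rw [show (∑ x, ∑ y, 2⁻¹ * w x y * u y x) = ∑ x, ∑ y, 2⁻¹ * (u y x * w x y) from
      sum2_congr _ _ fun x y => by ring, Finset.sum_comm]
    simp only [Finset.mul_sum]
  rw [E1, e1, e2, e3, e4]
  ring
end scalars5

section scalars6
variable {R : Fin n → Fin n → Fin n → Fin n → ℝ} {u w : Matrix (Fin n) (Fin n) ℝ}

lemma hRic1 (h1 : ∀ i j k l, R i j k l = - R j i k l)
    (h2 : ∀ i j k l, R i j k l = - R i j l k)
    (h3 : ∀ i j k l, R i j k l = R k l i j) (p q b : Fin n) :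
    R p q b q = R q b q p := by
  rw [h3 p q b q, h1 b q p q, h2 q b p q, neg_neg]

lemma mtraceM1 (h1 : ∀ i j k l, R i j k l = - R j i k l)
    (h2 : ∀ i j k l, R i j k l = - R i j l k)
    (h3 : ∀ i j k l, R i j k l = R k l i j)
    (h4 : ∀ i j k l, R i j k l + R j k i l + R k i j l = 0)
    (hu : uᵀ = -u) (hw : wᵀ = -w) :
    mtraceR (fun x => adR u (adR w (RhatR R x)))
      = (∑ x, ∑ y, ∑ z, ricci R x y * u y z * w z x)
        + (1/2) * ∑ i, ∑ j, ∑ k, ∑ l, R i j k l * u i j * w k l := by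
  have key : ∀ p q : Fin n, (adR u (adR w (RhatR R (Matrix.single p q 1)))) p q
      = (1/2) * ((∑ a, ∑ b, u p a * w a b * R p q b q)
          - (∑ a, ∑ b, u p a * R p q a b * w b q)
          - (∑ a, ∑ b, w p b * R p q b a * u a q)
          + (∑ a, ∑ b, R p q p b * w b a * u a q)) := by
    intro p q
    simp only [adR, Matrix.sub_apply, Matrix.mul_apply, RhatR, Matrix.of_apply,
      Matrix.single, ite_and, mul_ite, mul_zero, mul_one, ite_mul, zero_mul,
      Finset.mul_sum, Finset.sum_mul, Finset.sum_sub_distrib, mul_sub, sub_mul,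
      Finset.sum_ite_irrel, Finset.sum_ite_eq, Finset.sum_ite_eq',
      Finset.mem_univ, if_true, Finset.sum_const_zero]
    simp only [← Finset.sum_neg_distrib, ← Finset.sum_sub_distrib, ← Finset.sum_add_distrib,
      Finset.mul_sum]
    exact sum2_congr _ _ fun a b => by ring
  have A1 : (∑ p, ∑ q, ∑ a, ∑ b, u p a * w a b * R p q b q)
      = ∑ x, ∑ y, ∑ z, ricci R x y * u y z * w z x := by
    rw [show (∑ p, ∑ q, ∑ a, ∑ b, u p a * w a b * R p q b q)
        = ∑ p, ∑ q, ∑ a, ∑ b, R q b q p * (u p a * w a b) from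
      sum4_congr _ _ fun p q a b => by rw [hRic1 h1 h2 h3 p q b]; ring]
    rw [sum4_rot2]
    rw [show (∑ p, ∑ a, ∑ b, ∑ q, R q b q p * (u p a * w a b))
        = ∑ p, ∑ a, ∑ b, ricci R b p * (u p a * w a b) from
      sum3_congr _ _ fun p a b => by
        rw [← Finset.sum_mul]; simp [ricci]]
    rw [sum3_rotR']
    exact sum3_congr _ _ fun b p a => by ring
  have A2 : (∑ p, ∑ q, ∑ a, ∑ b, u p a * R p q a b * w b q)
      = ∑ i, ∑ j, ∑ k, ∑ l, R i j k l * u i k * w l j :=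
    sum4_congr _ _ fun p q a b => by ring
  have A3 : (∑ p, ∑ q, ∑ a, ∑ b, w p b * R p q b a * u a q)
      = ∑ i, ∑ j, ∑ k, ∑ l, R i j k l * u i k * w l j := by
    rw [← PP'_eq h1 h2 h3]
    refine sum4_equiv _ _ (eSwap34 (n := n)) fun p q a b => ?_
    simp only [eSwap34, Equiv.coe_fn_mk]
    ring
  have A4 : (∑ p, ∑ q, ∑ a, ∑ b, R p q p b * w b a * u a q)
      = ∑ x, ∑ y, ∑ z, ricci R x y * u y z * w z x := by
    rw [show (∑ p, ∑ q, ∑ a, ∑ b, R p q p b * w b a * u a q)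
        = ∑ p, ∑ q, ∑ a, ∑ b, R p q p b * (w b a * u a q) from
      sum4_congr _ _ fun p q a b => by ring]
    rw [sum4_rotL]
    rw [show (∑ q, ∑ a, ∑ b, ∑ p, R p q p b * (w b a * u a q))
        = ∑ q, ∑ a, ∑ b, ricci R q b * (w b a * u a q) from
      sum3_congr _ _ fun q a b => by
        rw [← Finset.sum_mul]; simp [ricci]]
    rw [sum3_swap23, ← TT'_eq h3 hu hw]
    exact sum3_congr _ _ fun q b a => by ring
  simp only [mtraceR, key]
  rw [show (∑ p, ∑ q, (1/2 : ℝ) * ((∑ a, ∑ b, u p a * w a b * R p q b q)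
      - (∑ a, ∑ b, u p a * R p q a b * w b q)
      - (∑ a, ∑ b, w p b * R p q b a * u a q)
      + (∑ a, ∑ b, R p q p b * w b a * u a q)))
    = (1/2 : ℝ) * ((∑ p, ∑ q, ∑ a, ∑ b, u p a * w a b * R p q b q)
      - (∑ p, ∑ q, ∑ a, ∑ b, u p a * R p q a b * w b q)
      - (∑ p, ∑ q, ∑ a, ∑ b, w p b * R p q b a * u a q)
      + (∑ p, ∑ q, ∑ a, ∑ b, R p q p b * w b a * u a q)) from by
    simp only [Finset.mul_sum, Finset.sum_sub_distrib, Finset.sum_add_distrib,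
      mul_sub, mul_add]]
  rw [A1, A2, A3, A4, PP_eq h1 h2 h3 h4 hu hw]
  ring
end scalars6

section scalars7
variable {R : Fin n → Fin n → Fin n → Fin n → ℝ} {u w : Matrix (Fin n) (Fin n) ℝ}

lemma mtraceM2 (h1 : ∀ i j k l, R i j k l = - R j i k l)
    (h2 : ∀ i j k l, R i j k l = - R i j l k)
    (h3 : ∀ i j k l, R i j k l = R k l i j)
    (h4 : ∀ i j k l, R i j k l + R j k i l + R k i j l = 0)
    (hu : uᵀ = -u) (hw : wᵀ = -w) :
    mtraceR (fun x => adR u (RhatR R (adR w x)))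
      = (∑ x, ∑ y, ∑ z, ricci R x y * u y z * w z x)
        + (1/2) * ∑ i, ∑ j, ∑ k, ∑ l, R i j k l * u i j * w k l := by
  have key : ∀ p q : Fin n, (adR u (RhatR R (adR w (Matrix.single p q 1)))) p q
      = (1/2) * ((∑ k, ∑ a, u p k * w a p * R a q k q)
          - (∑ k, ∑ a, u p k * w q a * R p a k q)
          - (∑ k, ∑ a, w a p * R a q p k * u k q)
          + (∑ k, ∑ a, w q a * R p a p k * u k q)) := by
    intro p q
    simp only [adR, Matrix.sub_apply, Matrix.mul_apply, RhatR, Matrix.of_apply,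
      Matrix.single, ite_and, mul_ite, mul_zero, mul_one, ite_mul, zero_mul,
      Finset.mul_sum, Finset.sum_mul, Finset.sum_sub_distrib, mul_sub, sub_mul,
      Finset.sum_ite_irrel, Finset.sum_ite_eq, Finset.sum_ite_eq',
      Finset.mem_univ, if_true, Finset.sum_const_zero]
    simp only [← Finset.sum_neg_distrib, ← Finset.sum_sub_distrib, ← Finset.sum_add_distrib,
      Finset.mul_sum]
    exact sum2_congr _ _ fun a b => by ring
  have B1 : (∑ p, ∑ q, ∑ k, ∑ a, u p k * w a p * R a q k q)
      = ∑ x, ∑ y, ∑ z, ricci R x y * w y z * u z x := by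
    rw [show (∑ p, ∑ q, ∑ k, ∑ a, u p k * w a p * R a q k q)
        = ∑ p, ∑ q, ∑ k, ∑ a, R q k q a * (u p k * w a p) from
      sum4_congr _ _ fun p q k a => by rw [hRic1 h1 h2 h3 a q k]; ring]
    rw [sum4_rot2]
    rw [show (∑ p, ∑ k, ∑ a, ∑ q, R q k q a * (u p k * w a p))
        = ∑ p, ∑ k, ∑ a, ricci R k a * (u p k * w a p) from
      sum3_congr _ _ fun p k a => by rw [← Finset.sum_mul]; simp [ricci]]
    rw [sum3_rotL]
    exact sum3_congr _ _ fun k a p => by ring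
  have B2 : (∑ p, ∑ q, ∑ k, ∑ a, u p k * w q a * R p a k q)
      = ∑ i, ∑ j, ∑ k, ∑ l, R i j k l * u i k * w l j := by
    refine sum4_equiv _ _ (eSwap24 (n := n)) fun p q k a => ?_
    simp only [eSwap24, Equiv.coe_fn_mk]
    ring
  have B3 : (∑ p, ∑ q, ∑ k, ∑ a, w a p * R a q p k * u k q)
      = ∑ i, ∑ j, ∑ k, ∑ l, R i j k l * u i k * w l j := by
    rw [← PP'_eq h1 h2 h3]
    refine sum4_equiv _ _ (eB3 (n := n)) fun p q k a => ?_
    simp only [eB3, Equiv.coe_fn_mk]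
    ring
  have B4 : (∑ p, ∑ q, ∑ k, ∑ a, w q a * R p a p k * u k q)
      = ∑ x, ∑ y, ∑ z, ricci R x y * u y z * w z x := by
    rw [show (∑ p, ∑ q, ∑ k, ∑ a, w q a * R p a p k * u k q)
        = ∑ p, ∑ q, ∑ k, ∑ a, R p a p k * (w q a * u k q) from
      sum4_congr _ _ fun p q k a => by ring]
    rw [sum4_rotL]
    rw [show (∑ q, ∑ k, ∑ a, ∑ p, R p a p k * (w q a * u k q))
        = ∑ q, ∑ k, ∑ a, ricci R a k * (w q a * u k q) from
      sum3_congr _ _ fun q k a => by rw [← Finset.sum_mul]; simp [ricci]]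
    rw [sum3_swap13]
    exact sum3_congr _ _ fun a k q => by ring
  simp only [mtraceR, key]
  rw [show (∑ p, ∑ q, (1/2 : ℝ) * ((∑ k, ∑ a, u p k * w a p * R a q k q)
      - (∑ k, ∑ a, u p k * w q a * R p a k q)
      - (∑ k, ∑ a, w a p * R a q p k * u k q)
      + (∑ k, ∑ a, w q a * R p a p k * u k q)))
    = (1/2 : ℝ) * ((∑ p, ∑ q, ∑ k, ∑ a, u p k * w a p * R a q k q)
      - (∑ p, ∑ q, ∑ k, ∑ a, u p k * w q a * R p a k q)
      - (∑ p, ∑ q, ∑ k, ∑ a, w a p * R a q p k * u k q)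
      + (∑ p, ∑ q, ∑ k, ∑ a, w q a * R p a p k * u k q)) from by
    simp only [Finset.mul_sum, Finset.sum_sub_distrib, Finset.sum_add_distrib,
      mul_sub, mul_add]]
  rw [B1, B2, B3, B4, PP_eq h1 h2 h3 h4 hu hw, TT'_eq h3 hu hw]
  ring
end scalars7

/-- `Q(R + ℓ·I) = Q(R) + ℓ·(Ric ⊼ id) + (n−1)·ℓ²·I` as symmetric bilinear
forms on `so(n,ℝ)`. -/
theorem stmt7 (n : ℕ) (hn : 2 ≤ n) (R : Fin n → Fin n → Fin n → Fin n → ℝ)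
    (hR : IsCurvOp n R) (ℓ : ℝ) :
    ∀ u w : Matrix (Fin n) (Fin n) ℝ, uᵀ = -u → wᵀ = -w →
      QformR (fun i j k l => R i j k l + ℓ * Iop n i j k l) u w =
        QformR R u w + ℓ * rformR (KN (ricci R) 1) u w
          + (n - 1) * ℓ^2 * rformR (Iop n) u w := by
  obtain ⟨h1, h2, h3, h4⟩ := hR
  intro u w hu hw
  unfold QformR
  rw [r2_decomp hu hw ℓ, sharp_decomp h1 h2 hu hw ℓ, traceA hw,
    traceB h2 h3, SS_wu (u := u) (w := w) h3, mtraceM1 h1 h2 h3 h4 hu hw, mtraceM2 h1 h2 h3 h4 hu hw,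
    mtraceM3 hu hw, rformKN h3 hu hw, rformIop hw]
  ring
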